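/- Let N be a positive integer and t > -log N. Define θ_n(t,N) = ∫_N^n dx/(t+log x) - Σ_{k=N}^{n-1} 1/(H_k - γ + t) for n ≥ N. Then the sequence θ_n(t,N) is positive, strictly increasing, and bounded above, so the limit θ(t,N) = lim_{n→∞} θ_n(t,N) exists and is positive. -/

import Mathlib

open Real Filter MeasureTheory Finset Topology

lemma aux_log_lower (u : ℝ) (hu : 0 < u) : 2*u/(2+u) < Real.log (1+u) := by
  have key : StrictMonoOn (fun x : ℝ => Real.log (1+x) - 2*x/(2+x)) (Set.Ici 0) := by
    apply strictMonoOn_of_deriv_pos (convex_Ici 0)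
    · apply ContinuousOn.sub
      · exact ContinuousOn.log (continuous_const.add continuous_id).continuousOn
          (fun x hx => by simp only [Set.mem_Ici] at hx; positivity)
      · exact ContinuousOn.div (continuous_const.mul continuous_id).continuousOn
          (continuous_const.add continuous_id).continuousOn
          (fun x hx => by simp only [Set.mem_Ici] at hx; positivity)
    · intro x hx
      rw [interior_Ici] at hx
      have hx : (0:ℝ) < x := hx
      have h1 : HasDerivAt (fun y : ℝ => Real.log (1+y)) (1/(1+x)) x := by
        have h := ((hasDerivAt_id x).const_add 1).log (by positivity : (1:ℝ)+x ≠ 0)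
        simpa using h
      have h2 : HasDerivAt (fun y : ℝ => 2*y/(2+y)) (4/(2+x)^2) x := by
        have ha : HasDerivAt (fun y : ℝ => 2*y) 2 x := by
          simpa using (hasDerivAt_id x).const_mul (2:ℝ)
        have hb : HasDerivAt (fun y : ℝ => 2+y) 1 x := (hasDerivAt_id x).const_add 2
        have h := ha.div hb (by positivity : (2:ℝ)+x ≠ 0)
        refine h.congr_deriv ?_
        ring
      rw [show deriv (fun x => Real.log (1 + x) - 2 * x / (2 + x)) x = _ from (h1.sub h2).deriv]
      have e : 1/(1+x) - 4/(2+x)^2 = x^2/((1+x)*(2+x)^2) := by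
        field_simp
        ring
      rw [e]
      positivity
  have h := key (Set.mem_Ici.mpr le_rfl) (Set.mem_Ici.mpr hu.le) hu
  simpa using h

lemma logC {a b : ℝ} (ha : 0 < a) (hab : a < b) :
    2*(b-a)/(a+b) < Real.log b - Real.log a := by
  have hu : 0 < (b-a)/a := div_pos (sub_pos.2 hab) ha
  have h := aux_log_lower _ hu
  have hb : 0 < b := ha.trans hab
  have e1 : 1 + (b-a)/a = b/a := by field_simp; ring
  have h1 : 2 + (b-a)/a = (a+b)/a := by field_simp; ring
  have e2 : 2*((b-a)/a)/(2+(b-a)/a) = 2*(b-a)/(a+b) := by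
    rw [h1]
    have hab0 : a + b ≠ 0 := by positivity
    field_simp
  rw [e1, e2, Real.log_div hb.ne' ha.ne'] at h
  exact h

lemma harmonic_mid (k : ℕ) :
    Real.log (k + 1/2) + Real.eulerMascheroniConstant < (harmonic k : ℝ) := by
  set b : ℕ → ℝ := fun k => (harmonic k : ℝ) - Real.log (k + 1/2) with hb
  have hstep : ∀ m : ℕ, b (m+1) < b m := by
    intro m
    have h := logC (a := (m:ℝ) + 1/2) (b := (m:ℝ) + 3/2) (by positivity) (by linarith)
    have e : 2*(((m:ℝ)+3/2) - ((m:ℝ)+1/2))/(((m:ℝ)+1/2) + ((m:ℝ)+3/2)) = 1/((m:ℝ)+1) := by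
      field_simp
      ring
    rw [e] at h
    simp only [hb, harmonic_succ]
    push_cast
    have : ((m:ℝ)+1) + 1/2 = (m:ℝ) + 3/2 := by ring
    rw [this, inv_eq_one_div]
    linarith
  have hanti : StrictAnti b := strictAnti_nat_of_succ_lt hstep
  have hge : ∀ m : ℕ, Real.eulerMascheroniConstant ≤ b m := by
    intro m
    refine le_of_tendsto Real.tendsto_eulerMascheroniSeq ?_
    filter_upwards [eventually_ge_atTop m] with j hj
    have h1 : Real.eulerMascheroniSeq j ≤ b j := by
      rw [Real.eulerMascheroniSeq, hb]
      have : Real.log (j + 1/2) ≤ Real.log (j + 1) :=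
        Real.log_le_log (by positivity) (by linarith)
      linarith
    exact h1.trans (hanti.antitone hj)
  have := (hge (k+1)).trans_lt (hstep k)
  simp only [hb] at this
  linarith

/-- The sequence `θ_n(t,N) = ∫_N^n dx/(t+log x) - Σ_{k=N}^{n-1} 1/(H_k - γ + t)`. -/
noncomputable def thetaSeq (N : ℕ) (t : ℝ) (n : ℕ) : ℝ :=
  (∫ x in (N : ℝ)..(n : ℝ), 1 / (t + Real.log x)) -
    ∑ k ∈ Finset.Ico N n, 1 / ((harmonic k : ℝ) - Real.eulerMascheroniConstant + t)

theorem stmt_13 (N : ℕ) (hN : 0 < N) (t : ℝ) (ht : -Real.log N < t) :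
    (∀ n : ℕ, N < n → 0 < thetaSeq N t n) ∧
    (∀ n : ℕ, N ≤ n → thetaSeq N t n < thetaSeq N t (n + 1)) ∧
    (∃ B : ℝ, ∀ n : ℕ, N ≤ n → thetaSeq N t n ≤ B) ∧
    ∃ L : ℝ, 0 < L ∧ Filter.Tendsto (thetaSeq N t) Filter.atTop (𝓝 L) := by
  set f : ℝ → ℝ := fun x => 1 / (t + Real.log x) with hf
  have hN1 : (1:ℝ) ≤ (N:ℝ) := by exact_mod_cast hN
  -- positivity of t + log x for x ≥ N
  have hposx : ∀ x : ℝ, (N:ℝ) ≤ x → 0 < t + Real.log x := by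
    intro x hx
    have : Real.log N ≤ Real.log x := Real.log_le_log (by linarith) hx
    linarith
  -- continuity on Ici N
  have hcont : ContinuousOn f (Set.Ici (N:ℝ)) := by
    intro x hx
    have hx' : (N:ℝ) ≤ x := hx
    have hx0 : (0:ℝ) < x := by linarith
    exact (continuousAt_const.div
      (continuousAt_const.add (Real.continuousAt_log hx0.ne'))
      (hposx x hx').ne').continuousWithinAt
  -- interval integrability
  have hci : ∀ a b : ℝ, (N:ℝ) ≤ a → (N:ℝ) ≤ b → IntervalIntegrable f volume a b := by
    intro a b ha hb
    refine (hcont.mono ?_).intervalIntegrable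
    intro x hx
    rcases Set.mem_uIcc.mp hx with h | h <;> exact Set.mem_Ici.mpr (by linarith [h.1])
  -- midpoint lower bound for the integral
  have hmid : ∀ n : ℕ, N ≤ n →
      1 / (t + Real.log ((n:ℝ) + 1/2)) ≤ ∫ x in (n:ℝ)..((n:ℝ)+1), f x := by
    intro n hn
    have hnN : (N:ℝ) ≤ (n:ℝ) := by exact_mod_cast hn
    set m : ℝ := (n:ℝ) + 1/2 with hm
    have hmN : (N:ℝ) ≤ m := by simp [hm]; linarith
    have hM : 0 < t + Real.log m := hposx m hmN
    -- reflection
    have hrefl : (∫ x in (n:ℝ)..((n:ℝ)+1), f (2*m - x)) = ∫ x in (n:ℝ)..((n:ℝ)+1), f x := by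
      rw [intervalIntegral.integral_comp_sub_left f (2*m)]
      congr 1 <;> simp only [hm] <;> ring
    have hint1 : IntervalIntegrable f volume (n:ℝ) ((n:ℝ)+1) := hci _ _ hnN (by linarith)
    have hint2 : IntervalIntegrable (fun x => f (2*m - x)) volume (n:ℝ) ((n:ℝ)+1) := by
      apply ContinuousOn.intervalIntegrable
      apply hcont.comp ((continuous_const.sub continuous_id).continuousOn :
        ContinuousOn (fun x : ℝ => 2*m - x) (Set.uIcc (n:ℝ) ((n:ℝ)+1)))
      intro x hx
      rcases Set.mem_uIcc.mp hx with h | h <;>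
        · simp only [hm] at *
          exact Set.mem_Ici.mpr (by simp only [Pi.sub_apply, id]; linarith [h.1, h.2])
    have hptwise : ∀ x ∈ Set.Icc (n:ℝ) ((n:ℝ)+1), 2 / (t + Real.log m) ≤ f x + f (2*m - x) := by
      intro x hx
      obtain ⟨hx1, hx2⟩ := hx
      have hxN : (N:ℝ) ≤ x := le_trans hnN hx1
      have hyN : (N:ℝ) ≤ 2*m - x := by simp only [hm]; linarith
      have hp : 0 < t + Real.log x := hposx x hxN
      have hq : 0 < t + Real.log (2*m - x) := hposx _ hyN
      have hx0 : (0:ℝ) < x := by linarith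
      have hy0 : (0:ℝ) < 2*m - x := by simp only [hm] at *; linarith
      have hm0 : (0:ℝ) < m := by linarith
      have hsum : Real.log x + Real.log (2*m - x) ≤ 2 * Real.log m := by
        have h1 : x * (2*m - x) ≤ m^2 := by nlinarith [sq_nonneg (x - m)]
        have h2 : Real.log (x * (2*m - x)) ≤ Real.log (m^2) :=
          Real.log_le_log (by positivity) h1
        rw [Real.log_mul hx0.ne' hy0.ne'] at h2
        rw [sq, Real.log_mul hm0.ne' hm0.ne'] at h2
        linarith
      have key : 2 / (t + Real.log m) ≤ 1/(t + Real.log x) + 1/(t + Real.log (2*m - x)) := by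
        rw [div_add_div _ _ hp.ne' hq.ne', div_le_div_iff₀ hM (by positivity)]
        nlinarith [sq_nonneg ((t + Real.log x) - (t + Real.log (2*m - x))), mul_pos hp hq]
      exact key
    have hmono := intervalIntegral.integral_mono_on (by linarith : (n:ℝ) ≤ (n:ℝ)+1)
      (intervalIntegrable_const) (hint1.add hint2) hptwise
    rw [intervalIntegral.integral_add hint1 hint2, hrefl,
      intervalIntegral.integral_const] at hmono
    have : ((n:ℝ)+1 - (n:ℝ)) • (2 / (t + Real.log m)) = 2 / (t + Real.log m) := by
      norm_num
    rw [this] at hmono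
    rw [hm] at hM ⊢
    rw [hm] at hmono
    have e2 : 2/(t + Real.log ((n:ℝ) + 1/2)) = 2*(1/(t + Real.log ((n:ℝ) + 1/2))) := by ring
    rw [e2] at hmono
    linarith
  -- positivity of denominators
  have hden : ∀ k : ℕ, N ≤ k → 0 < (harmonic k : ℝ) - Real.eulerMascheroniConstant + t := by
    intro k hk
    have h1 := harmonic_mid k
    have hkN : (N:ℝ) ≤ (k:ℝ) := by exact_mod_cast hk
    have h2 : Real.log N ≤ Real.log ((k:ℝ) + 1/2) :=
      Real.log_le_log (by linarith) (by linarith)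
    linarith
  have hBB : ∀ k : ℕ, (harmonic k : ℝ) - Real.eulerMascheroniConstant < Real.log ((k:ℝ)+1) := by
    intro k
    have := Real.eulerMascheroniSeq_lt_eulerMascheroniConstant k
    rw [Real.eulerMascheroniSeq] at this
    linarith
  -- increment formula
  have hincr : ∀ n : ℕ, N ≤ n → thetaSeq N t (n+1) = thetaSeq N t n +
      ((∫ x in (n:ℝ)..((n:ℝ)+1), f x) -
        1 / ((harmonic n : ℝ) - Real.eulerMascheroniConstant + t)) := by
    intro n hn
    have hnN : (N:ℝ) ≤ (n:ℝ) := by exact_mod_cast hn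
    have hadd := intervalIntegral.integral_add_adjacent_intervals
      (hci (N:ℝ) (n:ℝ) le_rfl hnN) (hci (n:ℝ) ((n:ℝ)+1) hnN (by linarith))
    have hsum := Finset.sum_Ico_succ_top hn
      (f := fun k => 1 / ((harmonic k : ℝ) - Real.eulerMascheroniConstant + t))
    simp only [thetaSeq]
    push_cast
    rw [← hadd, hsum]
    ring
  -- increment positive
  have hpos_incr : ∀ n : ℕ, N ≤ n →
      0 < (∫ x in (n:ℝ)..((n:ℝ)+1), f x) -
        1 / ((harmonic n : ℝ) - Real.eulerMascheroniConstant + t) := by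
    intro n hn
    have h1 := hmid n hn
    have h2 : 1 / ((harmonic n : ℝ) - Real.eulerMascheroniConstant + t)
        < 1 / (t + Real.log ((n:ℝ) + 1/2)) := by
      apply one_div_lt_one_div_of_lt
      · have hnN : (N:ℝ) ≤ (n:ℝ) := by exact_mod_cast hn
        exact hposx _ (by linarith)
      · have := harmonic_mid n; linarith
    linarith
  -- increment upper bound
  have hub_incr : ∀ n : ℕ, N ≤ n →
      (∫ x in (n:ℝ)..((n:ℝ)+1), f x) -
        1 / ((harmonic n : ℝ) - Real.eulerMascheroniConstant + t)
      ≤ 1 / (t + Real.log (n:ℝ)) - 1 / (t + Real.log ((n:ℝ)+1)) := by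
    intro n hn
    have hnN : (N:ℝ) ≤ (n:ℝ) := by exact_mod_cast hn
    have hup : (∫ x in (n:ℝ)..((n:ℝ)+1), f x) ≤ 1 / (t + Real.log (n:ℝ)) := by
      have hmono := intervalIntegral.integral_mono_on (by linarith : (n:ℝ) ≤ (n:ℝ)+1)
        (hci (n:ℝ) ((n:ℝ)+1) hnN (by linarith)) intervalIntegrable_const
        (g := fun _ => 1 / (t + Real.log (n:ℝ))) ?_
      · rw [intervalIntegral.integral_const] at hmono
        have : ((n:ℝ)+1 - (n:ℝ)) • (1 / (t + Real.log (n:ℝ))) = 1 / (t + Real.log (n:ℝ)) := by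
          norm_num
        rw [this] at hmono
        exact hmono
      · intro x hx
        apply one_div_le_one_div_of_le (hposx _ hnN)
        have : Real.log (n:ℝ) ≤ Real.log x := Real.log_le_log (by linarith) hx.1
        linarith
    have hlow : 1 / (t + Real.log ((n:ℝ)+1))
        ≤ 1 / ((harmonic n : ℝ) - Real.eulerMascheroniConstant + t) := by
      apply one_div_le_one_div_of_le (hden n hn)
      have := hBB n
      linarith
    linarith
  have htheta0 : thetaSeq N t N = 0 := by simp [thetaSeq]
  have hmono : ∀ n : ℕ, N ≤ n → thetaSeq N t n < thetaSeq N t (n+1) := by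
    intro n hn
    rw [hincr n hn]
    linarith [hpos_incr n hn]
  have hposth : ∀ n : ℕ, N < n → 0 < thetaSeq N t n := by
    intro n hn
    induction n, hn using Nat.le_induction with
    | base =>
      have h := hmono N le_rfl
      rw [htheta0] at h
      exact h
    | succ n hn ih => exact ih.trans (hmono n (by omega))
  have hbound : ∀ n : ℕ, N ≤ n →
      thetaSeq N t n ≤ 1/(t + Real.log (N:ℝ)) - 1/(t + Real.log (n:ℝ)) := by
    intro n hn
    induction n, hn using Nat.le_induction with
    | base => rw [htheta0]; simp
    | succ n hn ih =>
      have h := hub_incr n hn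
      have he := hincr n hn
      push_cast [he]
      push_cast at ih h
      linarith
  have hB : ∀ n : ℕ, N ≤ n → thetaSeq N t n ≤ 1/(t + Real.log (N:ℝ)) := by
    intro n hn
    have h := hbound n hn
    have hnN : (N:ℝ) ≤ (n:ℝ) := by exact_mod_cast hn
    have hp : 0 < 1/(t + Real.log (n:ℝ)) := one_div_pos.mpr (hposx _ hnN)
    linarith
  refine ⟨hposth, hmono, ⟨1/(t + Real.log (N:ℝ)), hB⟩, ?_⟩
  have hφmono : Monotone (fun m : ℕ => thetaSeq N t (m + N)) := by
    apply monotone_nat_of_le_succ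
    intro m
    have h := (hmono (m+N) (Nat.le_add_left N m)).le
    have e : m + 1 + N = m + N + 1 := by omega
    rw [e]
    exact h
  have hφbdd : BddAbove (Set.range (fun m : ℕ => thetaSeq N t (m + N))) := by
    refine ⟨1/(t + Real.log (N:ℝ)), ?_⟩
    rintro x ⟨m, rfl⟩
    exact hB (m+N) (Nat.le_add_left N m)
  have hlim := tendsto_atTop_ciSup hφmono hφbdd
  refine ⟨⨆ m : ℕ, thetaSeq N t (m + N), ?_, ?_⟩
  · have h1 : 0 < thetaSeq N t (1 + N) := hposth (1+N) (by omega)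
    exact h1.trans_le (le_ciSup hφbdd 1)
  · exact (Filter.tendsto_add_atTop_iff_nat N).mp hlim
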